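/- Let H be a real inner product space with inner product a, let M ⊆ H be a finite-dimensional subspace, E : H → M an a-orthogonal projection onto a subspace containing M's approximation, and P an a-orthogonal projection onto another subspace M̃. Then for any u with ||u||_a ≤ L, ||E u − P(E u)||_a ≤ dist_a(span{Eu}, M̃)·||Eu||_a ≤ L·dist_a(M_E, M̃), where M_E is any subspace containing Eu. In particular, ||(I − P)Eu||_a² ≤ ||u||_a² · dist_a(M_E, M̃)². -/

import Mathlib

/-- Distance from subspace `X` to subspace `Y`: supremum over unit vectors of `X` of the
distance to `Y`. -/
noncomputable def distSub {H : Type*} [NormedAddCommGroup H] [InnerProductSpace ℝ H]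
    (X Y : Submodule ℝ H) : ℝ :=
  ⨆ u : {u : H // u ∈ X ∧ ‖u‖ = 1}, ⨅ v : Y, ‖u.1 - (v : H)‖

lemma distSub_nonneg {H : Type*} [NormedAddCommGroup H] [InnerProductSpace ℝ H]
    (X Y : Submodule ℝ H) : 0 ≤ distSub X Y :=
  Real.iSup_nonneg fun _ => Real.iInf_nonneg fun _ => norm_nonneg _

lemma distSub_term_le_one {H : Type*} [NormedAddCommGroup H] [InnerProductSpace ℝ H]
    (X Y : Submodule ℝ H) (u : {u : H // u ∈ X ∧ ‖u‖ = 1}) :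
    (⨅ v : Y, ‖u.1 - (v : H)‖) ≤ 1 := by
  have h := ciInf_le (f := fun v : Y => ‖u.1 - (v : H)‖)
    ⟨0, by rintro x ⟨v, rfl⟩; exact norm_nonneg _⟩ (⟨0, Y.zero_mem⟩ : Y)
  simpa [u.2.2] using h

lemma distSub_bddAbove {H : Type*} [NormedAddCommGroup H] [InnerProductSpace ℝ H]
    (X Y : Submodule ℝ H) :
    BddAbove (Set.range fun u : {u : H // u ∈ X ∧ ‖u‖ = 1} => ⨅ v : Y, ‖u.1 - (v : H)‖) :=
  ⟨1, by rintro x ⟨w, rfl⟩; exact distSub_term_le_one X Y w⟩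

lemma distSub_mono {H : Type*} [NormedAddCommGroup H] [InnerProductSpace ℝ H]
    {X X' : Submodule ℝ H} (Y : Submodule ℝ H) (hXX : X ≤ X') :
    distSub X Y ≤ distSub X' Y := by
  refine Real.iSup_le (fun w => ?_) (distSub_nonneg X' Y)
  exact le_ciSup (distSub_bddAbove X' Y) (⟨w.1, hXX w.2.1, w.2.2⟩ :
    {u : H // u ∈ X' ∧ ‖u‖ = 1})

theorem stmt15 {H : Type*} [NormedAddCommGroup H] [InnerProductSpace ℝ H]
    (Mt : Submodule ℝ H) [CompleteSpace Mt]
    (E : H →ₗ[ℝ] H) (hE : ∀ w, ‖E w‖ ≤ ‖w‖)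
    (ME : Submodule ℝ H) (u : H) (hEu : E u ∈ ME)
    (L : ℝ) (hL : ‖u‖ ≤ L) :
    ‖E u - (Mt.orthogonalProjection (E u) : H)‖ ≤
        distSub (Submodule.span ℝ {E u}) Mt * ‖E u‖ ∧
    distSub (Submodule.span ℝ {E u}) Mt * ‖E u‖ ≤ L * distSub ME Mt ∧
    ‖E u - (Mt.orthogonalProjection (E u) : H)‖ ^ 2 ≤ ‖u‖ ^ 2 * distSub ME Mt ^ 2 := by
  have hL0 : 0 ≤ L := le_trans (norm_nonneg u) hL
  have hdME : 0 ≤ distSub ME Mt := distSub_nonneg ME Mt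
  -- main estimate
  have h1 : ‖E u - (Mt.orthogonalProjection (E u) : H)‖ ≤
      distSub (Submodule.span ℝ {E u}) Mt * ‖E u‖ := by
    by_cases h0 : E u = 0
    · simp [h0]
    · set x := E u with hx
      set w : H := ‖x‖⁻¹ • x with hw
      have hxn : ‖x‖ ≠ 0 := norm_ne_zero_iff.mpr h0
      have hwnorm : ‖w‖ = 1 := by
        rw [hw, norm_smul, norm_inv, norm_norm, inv_mul_cancel₀ hxn]
      have hwmem : w ∈ Submodule.span ℝ {x} :=
        Submodule.smul_mem _ _ (Submodule.mem_span_singleton_self x)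
      have key : ‖x - (Mt.orthogonalProjection x : H)‖ ≤ ‖x‖ * ⨅ v : Mt, ‖w - (v : H)‖ := by
        rw [mul_comm, ← div_le_iff₀ (lt_of_le_of_ne (norm_nonneg x) (Ne.symm hxn))]
        refine le_ciInf fun v => ?_
        rw [div_le_iff₀ (lt_of_le_of_ne (norm_nonneg x) (Ne.symm hxn))]
        have hmem : ‖x‖ • (v : H) ∈ Mt := Mt.smul_mem _ v.2
        have hmin : ‖x - (Mt.orthogonalProjection x : H)‖ ≤ ‖x - ‖x‖ • (v : H)‖ := by
          rw [← Submodule.starProjection_apply, Submodule.starProjection_minimal]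
          exact ciInf_le ⟨0, by rintro y ⟨z, rfl⟩; exact norm_nonneg _⟩
            (⟨‖x‖ • (v : H), hmem⟩ : Mt)
        refine hmin.trans (le_of_eq ?_)
        rw [mul_comm, ← norm_norm x, ← norm_smul, smul_sub, hw, smul_smul,
          mul_inv_cancel₀ (by simpa using hxn), one_smul, norm_norm]
      refine key.trans ?_
      rw [mul_comm]
      refine mul_le_mul_of_nonneg_right ?_ (norm_nonneg x)
      exact le_ciSup (distSub_bddAbove _ Mt)
        (⟨w, hwmem, hwnorm⟩ : {u : H // u ∈ Submodule.span ℝ {x} ∧ ‖u‖ = 1})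
  have hspan : distSub (Submodule.span ℝ {E u}) Mt ≤ distSub ME Mt :=
    distSub_mono Mt (Submodule.span_le.mpr (by simpa using hEu))
  have hEuL : ‖E u‖ ≤ L := (hE u).trans hL
  have h2 : distSub (Submodule.span ℝ {E u}) Mt * ‖E u‖ ≤ L * distSub ME Mt := by
    rw [mul_comm L]
    exact mul_le_mul hspan hEuL (norm_nonneg _) hdME
  refine ⟨h1, h2, ?_⟩
  have h3 : ‖E u - (Mt.orthogonalProjection (E u) : H)‖ ≤ ‖u‖ * distSub ME Mt := by
    refine h1.trans ?_
    rw [mul_comm (‖u‖)]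
    exact mul_le_mul hspan (hE u) (norm_nonneg _) hdME
  calc ‖E u - (Mt.orthogonalProjection (E u) : H)‖ ^ 2
      ≤ (‖u‖ * distSub ME Mt) ^ 2 := by
        exact pow_le_pow_left₀ (norm_nonneg _) h3 2
    _ = ‖u‖ ^ 2 * distSub ME Mt ^ 2 := by ring
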